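/- Let u ∈ C³(D) with |u'''| ≤ C₁ on D. Then there is a constant C, depending only on C₁, M, and f'(0), such that for all x ∈ D whose ε-neighborhood lies in D: |(2/ε²)∫_{x-ε}^{x+ε} J(|y-x|/ε) f'(0) S(y,x;u) dy - 𝔽·u''(x)| ≤ C·ε, where 𝔽 = ∫_{-1}^1 J(|z|) f'(0)|z| dz. That is, the linearized peridynamic force converges to the local elastic force 𝔽 u_{xx} at rate O(ε). -/

import Mathlib

open Set MeasureTheory intervalIntegral

private lemma mvt_abs {f f' : ℝ → ℝ} {C : ℝ} {s : Set ℝ} (hs : Convex ℝ s)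
    (hf : ∀ t ∈ s, HasDerivAt f (f' t) t)
    (hb : ∀ t ∈ s, |f' t| ≤ C) {a b : ℝ} (ha : a ∈ s) (hb' : b ∈ s) :
    |f b - f a| ≤ C * |b - a| := by
  have := Convex.norm_image_sub_le_of_norm_hasDerivWithin_le
    (f := f) (f' := f') (s := s) (C := C)
    (fun t ht => (hf t ht).hasDerivWithinAt) (fun t ht => by simpa using hb t ht)
    hs ha hb'
  simpa [Real.norm_eq_abs] using this

private lemma taylor_sym {u : ℝ → ℝ} {C₁ : ℝ} (hu : ContDiff ℝ 3 u)
    (hC₁ : ∀ z, |iteratedDeriv 3 u z| ≤ C₁) (x h : ℝ) :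
    |u (x + h) + u (x - h) - 2 * u x - h ^ 2 * deriv (deriv u) x| ≤ 2 * C₁ * |h| ^ 3 := by
  have h3 : ContDiff ℝ ((2:ℕ) + 1) u := by exact_mod_cast hu
  rw [contDiff_succ_iff_deriv] at h3
  obtain ⟨hd0, -, hc2⟩ := h3
  have h2 : ContDiff ℝ ((1:ℕ) + 1) (deriv u) := by exact_mod_cast hc2
  rw [contDiff_succ_iff_deriv] at h2
  obtain ⟨hd1, -, hc1⟩ := h2
  have hd2 : Differentiable ℝ (deriv (deriv u)) := hc1.differentiable (by norm_num)
  have hu3 : ∀ t, |deriv (deriv (deriv u)) t| ≤ C₁ := by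
    intro t
    have := hC₁ t
    simpa [iteratedDeriv_succ, iteratedDeriv_zero] using this
  set u1 := deriv u with hu1
  set u2 := deriv u1 with hu2
  set u3 := deriv u2 with hu3d
  -- Lipschitz bound for u2
  have hLip : ∀ a b : ℝ, |u2 b - u2 a| ≤ C₁ * |b - a| := by
    intro a b
    exact mvt_abs convex_univ (fun t _ => (hd2 t).hasDerivAt)
      (fun t _ => hu3 t) (mem_univ a) (mem_univ b)
  -- the auxiliary functions
  set g : ℝ → ℝ := fun t => u (x + t) + u (x - t) - 2 * u x - t ^ 2 * u2 x with hgdef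
  set g1 : ℝ → ℝ := fun t => u1 (x + t) - u1 (x - t) - 2 * t * u2 x with hg1def
  set g2 : ℝ → ℝ := fun t => u2 (x + t) + u2 (x - t) - 2 * u2 x with hg2def
  have hdg : ∀ t, HasDerivAt g (g1 t) t := by
    intro t
    have hA : HasDerivAt (fun t : ℝ => u (x + t)) (u1 (x + t)) t := by
      simpa [Function.comp_def] using (HasDerivAt.comp t (hd0 (x + t)).hasDerivAt ((hasDerivAt_id t).const_add x))
    have hB : HasDerivAt (fun t : ℝ => u (x - t)) (-u1 (x - t)) t := by
      simpa [Function.comp_def] using (HasDerivAt.comp t (hd0 (x - t)).hasDerivAt ((hasDerivAt_id t).const_sub x))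
    have hC : HasDerivAt (fun t : ℝ => t ^ 2 * u2 x) (2 * t * u2 x) t := by
      simpa [mul_comm] using (hasDerivAt_pow 2 t).mul_const (u2 x)
    have := ((hA.add hB).sub_const (2 * u x)).sub hC
    convert this using 1
    all_goals first | rfl | ring
  have hdg1 : ∀ t, HasDerivAt g1 (g2 t) t := by
    intro t
    have hA : HasDerivAt (fun t : ℝ => u1 (x + t)) (u2 (x + t)) t := by
      simpa [Function.comp_def] using (HasDerivAt.comp t (hd1 (x + t)).hasDerivAt ((hasDerivAt_id t).const_add x))
    have hB : HasDerivAt (fun t : ℝ => u1 (x - t)) (-u2 (x - t)) t := by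
      simpa [Function.comp_def] using (HasDerivAt.comp t (hd1 (x - t)).hasDerivAt ((hasDerivAt_id t).const_sub x))
    have hC : HasDerivAt (fun t : ℝ => 2 * t * u2 x) (2 * u2 x) t := by
      simpa [mul_assoc] using ((hasDerivAt_id t).const_mul 2).mul_const (u2 x)
    have := (hA.sub hB).sub hC
    convert this using 1
    all_goals first | rfl | ring
  -- membership facts
  have habs : ∀ t ∈ uIcc (0:ℝ) h, |t| ≤ |h| := by
    intro t ht
    rw [Set.uIcc] at ht
    obtain ⟨h1, h2⟩ := ht
    rw [abs_le]
    constructor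
    · exact le_trans (le_min (neg_nonpos.mpr (abs_nonneg h)) (neg_abs_le h)) h1
    · exact le_trans h2 (max_le (abs_nonneg h) (le_abs_self h))
  -- bound g2 on uIcc 0 h
  have hg2b : ∀ t ∈ uIcc (0:ℝ) h, |g2 t| ≤ 2 * C₁ * |h| := by
    intro t ht
    have e1 : |u2 (x + t) - u2 x| ≤ C₁ * |t| := by
      simpa using hLip x (x + t)
    have e2 : |u2 (x - t) - u2 x| ≤ C₁ * |t| := by
      simpa using hLip x (x - t)
    have : g2 t = (u2 (x + t) - u2 x) + (u2 (x - t) - u2 x) := by simp [hg2def]; ring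
    rw [this]
    have hC₁0 : 0 ≤ C₁ := le_trans (abs_nonneg _) (hC₁ 0)
    calc |(u2 (x + t) - u2 x) + (u2 (x - t) - u2 x)|
        ≤ |u2 (x + t) - u2 x| + |u2 (x - t) - u2 x| := abs_add_le _ _
      _ ≤ C₁ * |t| + C₁ * |t| := add_le_add e1 e2
      _ ≤ C₁ * |h| + C₁ * |h| := by
          have := habs t ht
          gcongr <;> assumption
      _ = 2 * C₁ * |h| := by ring
  -- bound g1 on uIcc 0 h
  have hg1b : ∀ t ∈ uIcc (0:ℝ) h, |g1 t| ≤ (2 * C₁ * |h|) * |h| := by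
    intro t ht
    have h0 : (0:ℝ) ∈ uIcc (0:ℝ) h := Set.left_mem_uIcc
    have := mvt_abs (convex_uIcc (0:ℝ) h) (fun s hs => hdg1 s) hg2b h0 ht
    have hg10 : g1 0 = 0 := by simp [hg1def]
    rw [hg10, sub_zero, sub_zero] at this
    calc |g1 t| ≤ 2 * C₁ * |h| * |t| := this
      _ ≤ 2 * C₁ * |h| * |h| := by
          have hC₁0 : 0 ≤ C₁ := le_trans (abs_nonneg _) (hC₁ 0)
          have := habs t ht
          gcongr
  -- final
  have h0 : (0:ℝ) ∈ uIcc (0:ℝ) h := Set.left_mem_uIcc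
  have hh : h ∈ uIcc (0:ℝ) h := Set.right_mem_uIcc
  have := mvt_abs (convex_uIcc (0:ℝ) h) (fun s hs => hdg s) hg1b h0 hh
  have hg0 : g 0 = 0 := by simp [hgdef]; ring
  rw [hg0, sub_zero, sub_zero] at this
  calc |u (x + h) + u (x - h) - 2 * u x - h ^ 2 * u2 x| = |g h| := rfl
    _ ≤ 2 * C₁ * |h| * |h| * |h| := this
    _ = 2 * C₁ * |h| ^ 3 := by ring



set_option maxHeartbeats 1000000 in
/-- For `u ∈ C³` with `|u'''| ≤ C₁`, there is a constant `C` (depending only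
on `C₁`, `M`, `f'(0)`) such that for all `x` and all `ε > 0`, the linearized peridynamic
force is within `C ε` of the local elastic force `𝔽 u''(x)`:
`|(2/ε²)∫_{x-ε}^{x+ε} J(|y-x|/ε) f'(0) S(y,x;u) dy - 𝔽 u''(x)| ≤ C ε`,
where `𝔽 = ∫_{-1}^1 J(|z|) f'(0) |z| dz` and `S(y,x;u) = (u y - u x)/|y-x|`. -/
theorem stmt_5 (u J : ℝ → ℝ) (C₁ M f'0 : ℝ) (hf'0 : 0 < f'0)
    (hu : ContDiff ℝ 3 u)
    (hC₁ : ∀ z, |iteratedDeriv 3 u z| ≤ C₁)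
    (hJ0 : ∀ r, 0 ≤ J r) (hJM : ∀ r, J r ≤ M)
    (hJsupp : ∀ r, r ∉ Set.Icc (0 : ℝ) 1 → J r = 0) :
    ∃ C > 0, ∀ (x : ℝ), ∀ ε > 0,
      abs ((2 / ε ^ 2) * (∫ y in (x - ε)..(x + ε),
            J (|y - x| / ε) * f'0 * ((u y - u x) / |y - x|))
          - (∫ z in (-1 : ℝ)..1, J |z| * f'0 * |z|) * deriv (deriv u) x) ≤ C * ε := by
  have hM0 : 0 ≤ M := le_trans (hJ0 0) (hJM 0)
  have hC₁0 : 0 ≤ C₁ := le_trans (abs_nonneg _) (hC₁ 0)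
  refine ⟨8 * M * f'0 * C₁ + 1, by positivity, ?_⟩
  intro x ε hε
  have hεne : ε ≠ 0 := ne_of_gt hε
  set u2x := deriv (deriv u) x with hu2xdef
  set A : ℝ → ℝ := fun z => J |z| * f'0 * ((u (x + ε * z) - u x) / (ε * |z|)) with hAdef
  set Bf : ℝ → ℝ := fun z => J |z| * f'0 * |z| with hBfdef
  set At : ℝ → ℝ := fun z =>
    (J |z| * f'0 * ((u (x + ε * z) + u (x - ε * z) - 2 * u x) / (ε * |z|))) / 2 with hAtdef
  have hA0 : A 0 = 0 := by rw [hAdef]; simp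
  have hAt0 : At 0 = 0 := by rw [hAtdef]; simp
  have hBf0 : Bf 0 = 0 := by rw [hBfdef]; simp
  -- change of variables
  have hCoV : (∫ y in (x - ε)..(x + ε),
      J (|y - x| / ε) * f'0 * ((u y - u x) / |y - x|)) = ε * ∫ z in (-1:ℝ)..1, A z := by
    have h1 := intervalIntegral.integral_comp_add_mul
        (f := fun y => J (|y - x| / ε) * f'0 * ((u y - u x) / |y - x|))
        (a := (-1:ℝ)) (b := 1) hεne x
    have e1 : x + ε * (-1) = x - ε := by ring
    have e2 : x + ε * 1 = x + ε := by ring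
    rw [e1, e2] at h1
    have h2 : ∀ z : ℝ, J (|x + ε * z - x| / ε) * f'0 * ((u (x + ε * z) - u x) / |x + ε * z - x|)
        = A z := by
      intro z
      have e3 : x + ε * z - x = ε * z := by ring
      rw [hAdef]
      simp only [e3, abs_mul, abs_of_pos hε, mul_div_cancel_left₀ _ hεne]
    simp only [h2] at h1
    rw [h1, smul_eq_mul, ← mul_assoc, mul_inv_cancel₀ hεne, one_mul]
  -- Taylor bound
  have hT : ∀ z : ℝ, |u (x + ε * z) + u (x - ε * z) - 2 * u x - ε ^ 2 * z ^ 2 * u2x|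
      ≤ 2 * C₁ * (ε ^ 3 * |z| ^ 3) := by
    intro z
    have h := taylor_sym hu hC₁ x (ε * z)
    rw [abs_mul, abs_of_pos hε, mul_pow, mul_pow] at h
    convert h using 2
    all_goals ring
  -- symmetrization
  have hAt_eq : ∀ z : ℝ, (A z + A (-z)) / 2 = At z := by
    intro z
    have e : x + ε * -z = x - ε * z := by ring
    simp only [hAdef, hAtdef, abs_neg, e]
    ring
  have hrefl : (∫ z in (-1:ℝ)..1, A (-z)) = ∫ z in (-1:ℝ)..1, A z := by
    simpa using intervalIntegral.integral_comp_neg (a := (-1:ℝ)) (b := 1) (f := A)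
  -- integrability transfer
  have hIoc : Set.uIoc (-1:ℝ) 1 = Set.Ioc (-1:ℝ) 1 := Set.uIoc_of_le (by norm_num)
  have habs1 : ∀ z ∈ Set.uIoc (-1:ℝ) 1, |z| ≤ 1 := by
    intro z hz
    rw [hIoc] at hz
    rw [abs_le]
    exact ⟨le_of_lt hz.1, hz.2⟩
  have htrans : IntervalIntegrable A volume (-1) 1 →
      IntervalIntegrable At volume (-1) 1 ∧
      (∫ z in (-1:ℝ)..1, At z) = ∫ z in (-1:ℝ)..1, A z := by
    intro hAint
    have hAneg : IntervalIntegrable (fun z => A (-z)) volume (-1) 1 := by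
      simpa using ((IntervalIntegrable.iff_comp_neg (f := A)).mp hAint).symm
    have hAtexp : At = fun z => (A z + A (-z)) / 2 := funext fun z => (hAt_eq z).symm
    constructor
    · rw [hAtexp]
      exact (hAint.add hAneg).div_const 2
    · rw [hAtexp]
      simp only [intervalIntegral.integral_div]
      rw [intervalIntegral.integral_add hAint hAneg, hrefl]
      ring
  by_cases hBint : IntervalIntegrable Bf volume (-1) 1
  · -- main case : Bf integrable, hence J measurable, hence A integrable
    have hψ : Measurable (fun z : ℝ => (u (x + ε * z) - u x) / (ε * z ^ 2)) := by
      apply Measurable.div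
      · exact ((hu.continuous.comp (by continuity)).sub continuous_const).measurable
      · exact (continuous_const.mul (continuous_pow 2)).measurable
    have hfact : A = fun z => Bf z * ((u (x + ε * z) - u x) / (ε * z ^ 2)) := by
      funext z
      by_cases hz : z = 0
      · subst hz
        simp [hAdef, hBfdef]
      · simp only [hAdef, hBfdef]
        rcases abs_cases z with ⟨he, -⟩ | ⟨he, -⟩ <;> rw [he] <;> field_simp <;> ring
    have hAm : AEStronglyMeasurable A (volume.restrict (Set.uIoc (-1:ℝ) 1)) := by
      rw [hfact]
      exact ((intervalIntegrable_iff.mp hBint).aestronglyMeasurable).mul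
        hψ.aestronglyMeasurable
    -- bound on A
    have hderivcont : Continuous (deriv u) := by
      have h3 : ContDiff ℝ ((2:ℕ) + 1) u := by exact_mod_cast hu
      rw [contDiff_succ_iff_deriv] at h3
      exact h3.2.2.continuous
    obtain ⟨L, hL⟩ := (isCompact_Icc (a := x - ε) (b := x + ε)).exists_bound_of_continuousOn
      hderivcont.continuousOn
    have hxmem : x ∈ Set.Icc (x - ε) (x + ε) := by
      constructor <;> linarith
    have hL0 : 0 ≤ L := le_trans (norm_nonneg _) (hL x hxmem)
    have hΔ : ∀ z : ℝ, |z| ≤ 1 → |u (x + ε * z) - u x| ≤ L * (ε * |z|) := by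
      intro z hz
      have h1 : |ε * z| ≤ ε := by
        rw [abs_mul, abs_of_pos hε]
        nlinarith
      rw [abs_le] at h1
      have hmem : x + ε * z ∈ Set.Icc (x - ε) (x + ε) := by
        constructor <;> linarith [h1.1, h1.2]
      have := Convex.norm_image_sub_le_of_norm_deriv_le (f := u)
        (fun y _ => hu.differentiable (by norm_num) y)
        hL (convex_Icc _ _) hxmem hmem
      rw [Real.norm_eq_abs, Real.norm_eq_abs] at this
      have e : x + ε * z - x = ε * z := by ring
      rw [e, abs_mul, abs_of_pos hε] at this
      exact this
    have hAb : ∀ z ∈ Set.uIoc (-1:ℝ) 1, ‖A z‖ ≤ M * f'0 * L := by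
      intro z hz
      have hz1 : |z| ≤ 1 := habs1 z hz
      rw [Real.norm_eq_abs]
      by_cases hz0 : z = 0
      · subst hz0
        rw [hA0, abs_zero]
        positivity
      · have hzpos : 0 < |z| := abs_pos.mpr hz0
        have h1 : 0 < ε * |z| := mul_pos hε hzpos
        rw [hAdef, abs_mul, abs_mul, abs_of_nonneg (hJ0 _), abs_of_pos hf'0, abs_div,
          abs_of_pos h1]
        have h2 : |u (x + ε * z) - u x| / (ε * |z|) ≤ L := by
          rw [div_le_iff₀ h1]
          calc |u (x + ε * z) - u x| ≤ L * (ε * |z|) := hΔ z hz1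
            _ = L * (ε * |z|) := rfl
        exact mul_le_mul (mul_le_mul_of_nonneg_right (hJM _) hf'0.le) h2
          (by positivity) (by positivity)
    have hAint : IntervalIntegrable A volume (-1) 1 := by
      rw [intervalIntegrable_iff]
      apply MeasureTheory.Integrable.mono'
        (g := fun _ => M * f'0 * L) ?_ hAm
      · exact (ae_restrict_mem measurableSet_uIoc).mono hAb
      · rw [hIoc]
        exact integrableOn_const measure_Ioc_lt_top.ne
    obtain ⟨hAtint, hAtA⟩ := htrans hAint
    rw [hCoV]
    have key : (2 / ε ^ 2) * (ε * ∫ z in (-1:ℝ)..1, A z) - (∫ z in (-1:ℝ)..1, Bf z) * u2x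
        = ∫ z in (-1:ℝ)..1, ((2 / ε) * At z - u2x * Bf z) := by
      rw [intervalIntegral.integral_sub (hAtint.const_mul _) (hBint.const_mul _),
        intervalIntegral.integral_const_mul, intervalIntegral.integral_const_mul, hAtA]
      field_simp
    rw [key]
    have hbound : ∀ z ∈ Set.uIoc (-1:ℝ) 1,
        ‖(2 / ε) * At z - u2x * Bf z‖ ≤ 2 * M * f'0 * C₁ * ε := by
      intro z hz
      have hz1 : |z| ≤ 1 := habs1 z hz
      by_cases hz0 : z = 0
      · subst hz0
        rw [hAt0, hBf0, mul_zero, mul_zero, sub_zero, norm_zero]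
        positivity
      · have hzpos : 0 < |z| := abs_pos.mpr hz0
        have heq : (2 / ε) * At z - u2x * Bf z
            = J |z| * f'0 *
              ((u (x + ε * z) + u (x - ε * z) - 2 * u x - ε ^ 2 * z ^ 2 * u2x)
                / (ε ^ 2 * |z|)) := by
          simp only [hAtdef, hBfdef]
          rcases abs_cases z with ⟨he, -⟩ | ⟨he, -⟩ <;> rw [he] <;> field_simp <;> ring
        rw [heq, Real.norm_eq_abs, abs_mul, abs_mul, abs_of_nonneg (hJ0 _),
          abs_of_pos hf'0, abs_div, abs_of_pos (by positivity : (0:ℝ) < ε ^ 2 * |z|)]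
        have h2 : |u (x + ε * z) + u (x - ε * z) - 2 * u x - ε ^ 2 * z ^ 2 * u2x|
            / (ε ^ 2 * |z|) ≤ 2 * C₁ * ε := by
          rw [div_le_iff₀ (by positivity)]
          calc |u (x + ε * z) + u (x - ε * z) - 2 * u x - ε ^ 2 * z ^ 2 * u2x|
              ≤ 2 * C₁ * (ε ^ 3 * |z| ^ 3) := hT z
            _ ≤ 2 * C₁ * ε * (ε ^ 2 * |z|) := by
                have h8 : |z| ^ 2 ≤ 1 := by nlinarith [hz1, abs_nonneg z]
                have h9 : |z| ^ 3 ≤ |z| := by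
                  calc |z| ^ 3 = |z| ^ 2 * |z| := by ring
                    _ ≤ 1 * |z| := mul_le_mul_of_nonneg_right h8 (abs_nonneg z)
                    _ = |z| := one_mul _
                nlinarith [mul_le_mul_of_nonneg_left h9
                  (by positivity : (0:ℝ) ≤ 2 * C₁ * ε ^ 3)]
        calc J |z| * f'0 * (|u (x + ε * z) + u (x - ε * z) - 2 * u x - ε ^ 2 * z ^ 2 * u2x|
              / (ε ^ 2 * |z|))
            ≤ M * f'0 * (2 * C₁ * ε) := by
              exact mul_le_mul (mul_le_mul_of_nonneg_right (hJM _) hf'0.le) h2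
                (by positivity) (by positivity)
          _ = 2 * M * f'0 * C₁ * ε := by ring
    have hnorm := intervalIntegral.norm_integral_le_of_norm_le_const hbound
    rw [Real.norm_eq_abs] at hnorm
    calc |∫ z in (-1:ℝ)..1, ((2 / ε) * At z - u2x * Bf z)|
        ≤ 2 * M * f'0 * C₁ * ε * |1 - (-1:ℝ)| := hnorm
      _ = 4 * M * f'0 * C₁ * ε := by
          rw [show |1 - (-1:ℝ)| = 2 by norm_num]
          ring
      _ ≤ (8 * M * f'0 * C₁ + 1) * ε := by
          have h10 : 0 ≤ M * f'0 * C₁ * ε := by positivity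
          nlinarith [h10]
  · -- degenerate case : Bf not integrable
    have hB0 : (∫ z in (-1:ℝ)..1, Bf z) = 0 := intervalIntegral.integral_undef hBint
    rw [hCoV, hB0, zero_mul, sub_zero]
    by_cases hAint : IntervalIntegrable A volume (-1) 1
    · obtain ⟨hAtint, hAtA⟩ := htrans hAint
      -- find a symmetric zero of the second difference
      have hex : ∃ z₀ : ℝ, z₀ ≠ 0 ∧ |z₀| ≤ 1 ∧
          u (x + ε * z₀) + u (x - ε * z₀) - 2 * u x = 0 := by
        by_contra hno
        push_neg at hno
        apply hBint
        set φ : ℝ → ℝ :=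
          fun z => 2 * ε * z ^ 2 / (u (x + ε * z) + u (x - ε * z) - 2 * u x) with hφdef
        have hφm : Measurable φ := by
          apply Measurable.div
          · exact (continuous_const.mul (continuous_pow 2)).measurable
          · exact (((hu.continuous.comp (by continuity)).add
              (hu.continuous.comp (by continuity))).sub continuous_const).measurable
        have hfact2 : ∀ z ∈ Set.uIoc (-1:ℝ) 1, Bf z = At z * φ z := by
          intro z hz
          have hz1 : |z| ≤ 1 := habs1 z hz
          by_cases hz0 : z = 0
          · subst hz0
            rw [hBf0, hAt0, zero_mul]
          · have hv := hno z hz0 hz1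
            simp only [hBfdef, hAtdef, hφdef]
            generalize u (x + ε * z) + u (x - ε * z) - 2 * u x = N at hv ⊢
            rcases abs_cases z with ⟨he, -⟩ | ⟨he, -⟩ <;> rw [he] <;> field_simp <;> ring
        have hBm : AEStronglyMeasurable Bf (volume.restrict (Set.uIoc (-1:ℝ) 1)) := by
          have hAtm : AEStronglyMeasurable At (volume.restrict (Set.uIoc (-1:ℝ) 1)) :=
            (intervalIntegrable_iff.mp hAtint).aestronglyMeasurable
          refine AEStronglyMeasurable.congr (hAtm.mul hφm.aestronglyMeasurable) ?_
          exact (ae_restrict_mem measurableSet_uIoc).mono fun z hz => (hfact2 z hz).symm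
        have hBb : ∀ z ∈ Set.uIoc (-1:ℝ) 1, ‖Bf z‖ ≤ M * f'0 := by
          intro z hz
          have hz1 : |z| ≤ 1 := habs1 z hz
          rw [Real.norm_eq_abs, hBfdef, abs_mul, abs_mul, abs_of_nonneg (hJ0 _),
            abs_of_pos hf'0, abs_abs]
          calc J |z| * f'0 * |z| ≤ M * f'0 * 1 := by
                exact mul_le_mul (mul_le_mul_of_nonneg_right (hJM _) hf'0.le) hz1
                  (abs_nonneg z) (by positivity)
            _ = M * f'0 := by ring
        rw [intervalIntegrable_iff]
        apply MeasureTheory.Integrable.mono' (g := fun _ => M * f'0) ?_ hBm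
        · exact (ae_restrict_mem measurableSet_uIoc).mono hBb
        · rw [hIoc]
          exact integrableOn_const measure_Ioc_lt_top.ne
      obtain ⟨z₀, hz₀0, hz₀1, hz₀v⟩ := hex
      have hz₀pos : 0 < |z₀| := abs_pos.mpr hz₀0
      -- deduce the second derivative is small
      have hu2small : |u2x| ≤ 2 * C₁ * ε := by
        have h1 := hT z₀
        have e : u (x + ε * z₀) + u (x - ε * z₀) - 2 * u x - ε ^ 2 * z₀ ^ 2 * u2x
            = -(ε ^ 2 * z₀ ^ 2 * u2x) := by
          rw [sub_eq_iff_eq_add]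
          linarith [hz₀v]
        rw [e, abs_neg, abs_mul, abs_of_pos (by positivity : (0:ℝ) < ε ^ 2 * z₀ ^ 2)] at h1
        have e3 : |z₀| ^ 3 = |z₀| * z₀ ^ 2 := by
          rw [pow_succ, sq_abs]
          ring
        rw [e3] at h1
        -- h1 : ε^2 * z₀^2 * |u2x| ≤ 2 * C₁ * (ε^3 * (|z₀| * z₀^2))
        have hz₀sq : 0 < z₀ ^ 2 := by positivity
        have h2 : |u2x| ≤ 2 * C₁ * ε * |z₀| := by
          rw [← mul_le_mul_iff_right₀ (by positivity : (0:ℝ) < ε ^ 2 * z₀ ^ 2)]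
          calc ε ^ 2 * z₀ ^ 2 * |u2x| ≤ 2 * C₁ * (ε ^ 3 * (|z₀| * z₀ ^ 2)) := h1
            _ = ε ^ 2 * z₀ ^ 2 * (2 * C₁ * ε * |z₀|) := by ring
        calc |u2x| ≤ 2 * C₁ * ε * |z₀| := h2
          _ ≤ 2 * C₁ * ε * 1 := by
              have := hε
              gcongr
          _ = 2 * C₁ * ε := by ring
      -- bound At pointwise
      have hAtb : ∀ z ∈ Set.uIoc (-1:ℝ) 1, ‖At z‖ ≤ 2 * M * f'0 * C₁ * ε ^ 2 := by
        intro z hz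
        have hz1 : |z| ≤ 1 := habs1 z hz
        by_cases hz0 : z = 0
        · subst hz0
          rw [hAt0, norm_zero]
          positivity
        · have hzpos : 0 < |z| := abs_pos.mpr hz0
          have hvb : |u (x + ε * z) + u (x - ε * z) - 2 * u x| ≤ 4 * C₁ * ε ^ 3 * z ^ 2 := by
            have h1 := hT z
            have h2 : |u (x + ε * z) + u (x - ε * z) - 2 * u x|
                ≤ |u (x + ε * z) + u (x - ε * z) - 2 * u x - ε ^ 2 * z ^ 2 * u2x|
                  + |ε ^ 2 * z ^ 2 * u2x| := by
              have := abs_sub_abs_le_abs_sub (u (x + ε * z) + u (x - ε * z) - 2 * u x)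
                (ε ^ 2 * z ^ 2 * u2x)
              have h3 := abs_add_le (u (x + ε * z) + u (x - ε * z) - 2 * u x
                - ε ^ 2 * z ^ 2 * u2x) (ε ^ 2 * z ^ 2 * u2x)
              simpa using h3
            have h4 : |ε ^ 2 * z ^ 2 * u2x| ≤ ε ^ 2 * z ^ 2 * (2 * C₁ * ε) := by
              rw [abs_mul, abs_of_pos (by positivity : (0:ℝ) < ε ^ 2 * z ^ 2)]
              exact mul_le_mul_of_nonneg_left hu2small (by positivity)
            have h5 : |z| ^ 3 ≤ z ^ 2 := by
              have : |z| ^ 3 = |z| * z ^ 2 := by rw [pow_succ, sq_abs]; ring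
              rw [this]
              nlinarith
            calc |u (x + ε * z) + u (x - ε * z) - 2 * u x|
                ≤ |u (x + ε * z) + u (x - ε * z) - 2 * u x - ε ^ 2 * z ^ 2 * u2x|
                  + |ε ^ 2 * z ^ 2 * u2x| := h2
              _ ≤ 2 * C₁ * (ε ^ 3 * |z| ^ 3) + ε ^ 2 * z ^ 2 * (2 * C₁ * ε) :=
                  add_le_add h1 h4
              _ ≤ 2 * C₁ * (ε ^ 3 * z ^ 2) + ε ^ 2 * z ^ 2 * (2 * C₁ * ε) := by
                  have : 2 * C₁ * (ε ^ 3 * |z| ^ 3) ≤ 2 * C₁ * (ε ^ 3 * z ^ 2) := by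
                    gcongr
                  linarith
              _ = 4 * C₁ * ε ^ 3 * z ^ 2 := by ring
          rw [Real.norm_eq_abs, hAtdef]
          have h1 : 0 < ε * |z| := mul_pos hε hzpos
          rw [abs_div, abs_mul, abs_mul, abs_of_nonneg (hJ0 _), abs_of_pos hf'0,
            abs_div, abs_of_pos h1, abs_of_pos (by norm_num : (0:ℝ) < 2)]
          have h6 : |u (x + ε * z) + u (x - ε * z) - 2 * u x| / (ε * |z|)
              ≤ 4 * C₁ * ε ^ 2 * |z| := by
            rw [div_le_iff₀ h1]
            calc |u (x + ε * z) + u (x - ε * z) - 2 * u x| ≤ 4 * C₁ * ε ^ 3 * z ^ 2 := hvb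
              _ = 4 * C₁ * ε ^ 2 * |z| * (ε * |z|) := by
                  rw [show (z:ℝ) ^ 2 = |z| ^ 2 from (sq_abs z).symm]
                  ring
          have h7 : J |z| * f'0 * (|u (x + ε * z) + u (x - ε * z) - 2 * u x| / (ε * |z|))
              ≤ M * f'0 * (4 * C₁ * ε ^ 2 * |z|) := by
                exact mul_le_mul (mul_le_mul_of_nonneg_right (hJM _) hf'0.le) h6
                  (by positivity) (by positivity)
          calc J |z| * f'0 * (|u (x + ε * z) + u (x - ε * z) - 2 * u x| / (ε * |z|)) / 2
              ≤ M * f'0 * (4 * C₁ * ε ^ 2 * |z|) / 2 := by linarith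
            _ ≤ M * f'0 * (4 * C₁ * ε ^ 2 * 1) / 2 := by gcongr
            _ = 2 * M * f'0 * C₁ * ε ^ 2 := by ring
      have hnorm := intervalIntegral.norm_integral_le_of_norm_le_const hAtb
      rw [Real.norm_eq_abs] at hnorm
      rw [← hAtA]
      have e8 : (2 / ε ^ 2) * (ε * ∫ z in (-1:ℝ)..1, At z)
          = (2 / ε) * ∫ z in (-1:ℝ)..1, At z := by
        field_simp
        try ring
      rw [e8]
      rw [abs_mul, abs_of_pos (by positivity : (0:ℝ) < 2 / ε)]
      calc (2 / ε) * |∫ z in (-1:ℝ)..1, At z|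
          ≤ (2 / ε) * (2 * M * f'0 * C₁ * ε ^ 2 * |1 - (-1:ℝ)|) := by
            gcongr
        _ = 8 * M * f'0 * C₁ * ε := by
            rw [show |1 - (-1:ℝ)| = 2 by norm_num]
            field_simp
            ring
        _ ≤ (8 * M * f'0 * C₁ + 1) * ε := by
            have h10 : 0 ≤ M * f'0 * C₁ * ε := by positivity
            nlinarith [h10]
    · rw [intervalIntegral.integral_undef hAint]
      simp only [mul_zero, abs_zero]
      positivity
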